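/- Let L be a relational coloring language and W a set of allowed diagrams in L. For every w ∈ W, the following are equivalent: (1) ER(w;W) = ∞; (2) ER(w;W) ≥ |L|⁺; (3) there is an infinite set M and a coloring c of M such that (M,c) ∈ K(W), M itself is monochromatic for c, and the diagram d_M of M extends w (i.e., d_M(k) = w(k) for all k in the domain of w). -/

import Mathlib

universe u v

open Cardinal

/-- A relational coloring language: a family of pairwise disjoint nonempty sets `R_n`
(`n ≥ 1`) of `n`-ary colors, encoded as a type of colors together with an arity map
whose fibers over `n ≥ 1` are all nonempty. -/
structure ColoringLanguage : Type (u + 1) where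
  Color : Type u
  arity : Color → ℕ
  arity_pos : ∀ r, 1 ≤ arity r
  exists_arity : ∀ n : ℕ, 1 ≤ n → ∃ r, arity r = n

namespace ColoringLanguage

variable (L : ColoringLanguage.{u})

/-- A diagram is (encoded as) a list of colors whose `i`-th entry (0-based) is an
`(i+1)`-ary color; it represents the function `w : [n] → R` with `w(k) ∈ R_k`. -/
def IsDiagram (l : List L.Color) : Prop :=
  ∀ (i : ℕ) (h : i < l.length), L.arity l[i] = i + 1

/-- A set of allowed diagrams: a nonempty set of diagrams closed under restriction to
initial segments. -/
def IsAllowed (W : Set (List L.Color)) : Prop :=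
  W.Nonempty ∧ (∀ l ∈ W, L.IsDiagram l) ∧ ∀ l ∈ W, ∀ m : ℕ, l.take m ∈ W

end ColoringLanguage

/-- `ERge W γ l` says that the existence rank of `l` with respect to `W` is `≥ γ`:
`ER(l;W) ≥ β + 1` iff some one-step extension `l' ∈ W` of `l` has `ER(l';W) ≥ β`,
with the limit (and zero) clauses as usual. -/
noncomputable def ERge {C : Type v} (W : Set (List C)) : Ordinal.{u} → List C → Prop :=
  WellFounded.fix Ordinal.lt_wf fun α IH l =>
    ∀ β, ∀ h : β < α,
      ∃ l' ∈ W, l'.length = l.length + 1 ∧ l'.take l.length = l ∧ IH β h l'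

/-- `prunedW W S` is `W_S`, the set of elements of `W` comparable with some element of `S`. -/
def prunedW {C : Type v} (W S : Set (List C)) : Set (List C) :=
  {w ∈ W | ∃ u ∈ S, w <+: u ∨ u <+: w}

/-- `quotW W wbar` is `W / w̄`: the set of diagrams `w / w̄` for `w ∈ W` extending `w̄`. -/
def quotW {C : Type v} (W : Set (List C)) (wbar : List C) : Set (List C) :=
  (fun l => l.drop wbar.length) '' {l ∈ W | wbar <+: l}

/-- The beth function with base `κ`: `ℶ_0(κ) = κ`, `ℶ_{α+1}(κ) = 2 ^ ℶ_α(κ)`,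
and suprema at limits. -/
noncomputable def bethF (κ : Cardinal.{u}) (o : Ordinal.{u}) : Cardinal.{u} :=
  Ordinal.limitRecOn o κ (fun _ ih => 2 ^ ih)
    fun o' _ ih => ⨆ b : Set.Iio o', ih b.1 b.2

/-- The cardinals `κ_α`: `κ_α = α` for finite `α`, suprema at limits, and
`κ_{β+1} = 2 ^ κ_β` for `β ≥ ω`. -/
noncomputable def kappaC (o : Ordinal.{u}) : Cardinal.{u} :=
  Ordinal.limitRecOn o 0
    (fun o' ih => if o' < Ordinal.omega0 then ih + 1 else 2 ^ ih)
    fun o' _ ih => ⨆ b : Set.Iio o', ih b.1 b.2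

namespace ColoringLanguage

variable (L : ColoringLanguage.{u}) {σ τ : Type u}

/-- `c` is an `L`-coloring of the set `M`: every finite nonempty `A ⊆ M` gets a color
of arity `|A|`. (Values of `c` outside of `M` are irrelevant.) -/
def IsColoring (M : Set σ) (c : Finset σ → L.Color) : Prop :=
  ∀ A : Finset σ, ↑A ⊆ M → A.Nonempty → L.arity (c A) = A.card

/-- `B` is monochromatic for `c`: any two finite nonempty subsets of `B` of equal size
get the same color. -/
def Mono (c : Finset σ → L.Color) (B : Set σ) : Prop :=
  ∀ A₁ A₂ : Finset σ, ↑A₁ ⊆ B → ↑A₂ ⊆ B → A₁.Nonempty → A₁.card = A₂.card → c A₁ = c A₂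

/-- `l` is the diagram of the (monochromatic) finite set `B` under `c`. -/
def DiagramOf (c : Finset σ → L.Color) (B : Finset σ) (l : List L.Color) : Prop :=
  l.length = B.card ∧ ∀ A : Finset σ, A ⊆ B → A.Nonempty → l[A.card - 1]? = some (c A)

/-- `(M,c)` is a member of the coloring class `K(W)`: `c` is an `L`-coloring of `M`
and every finite nonempty monochromatic subset of `M` has its diagram in `W`. -/
def MemK (W : Set (List L.Color)) (M : Set σ) (c : Finset σ → L.Color) : Prop :=
  L.IsColoring M c ∧
    ∀ B : Finset σ, ↑B ⊆ M → B.Nonempty → L.Mono c ↑B → ∃ l ∈ W, L.DiagramOf c B l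

/-- `(M,c)` is a substructure of `(N,c')`. -/
def Substruct (M : Set σ) (c : Finset σ → L.Color) (N : Set σ)
    (c' : Finset σ → L.Color) : Prop :=
  M ⊆ N ∧ ∀ A : Finset σ, ↑A ⊆ M → A.Nonempty → c A = c' A

/-- `f` is an embedding of `(M,c)` into `(N,c')`. -/
def Emb (f : σ → τ) (M : Set σ) (c : Finset σ → L.Color) (N : Set τ)
    (c' : Finset τ → L.Color) : Prop :=
  Set.InjOn f M ∧ f '' M ⊆ N ∧
    ∀ A : Finset σ, ↑A ⊆ M → A.Nonempty →
      haveI := Classical.decEq τ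
      c' (A.image f) = c A

/-- `K(W)` has the amalgamation property for models of size `lam`. -/
def HasAPAt (W : Set (List L.Color)) (lam : Cardinal.{u}) : Prop :=
  ∀ (σ : Type u) (M₀ M₁ M₂ : Set σ) (c₀ c₁ c₂ : Finset σ → L.Color),
    L.MemK W M₀ c₀ → L.MemK W M₁ c₁ → L.MemK W M₂ c₂ →
    Cardinal.mk ↥M₀ = lam → Cardinal.mk ↥M₁ = lam → Cardinal.mk ↥M₂ = lam →
    L.Substruct M₀ c₀ M₁ c₁ → L.Substruct M₀ c₀ M₂ c₂ →
    ∃ (τ : Type u) (N : Set τ) (c : Finset τ → L.Color) (f₁ f₂ : σ → τ),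
      L.MemK W N c ∧ L.Emb f₁ M₁ c₁ N c ∧ L.Emb f₂ M₂ c₂ N c ∧
      ∀ x ∈ M₀, f₁ x = f₂ x

/-- `K(W)` has the disjoint amalgamation property for models of size `lam`. -/
def HasDAPAt (W : Set (List L.Color)) (lam : Cardinal.{u}) : Prop :=
  ∀ (σ : Type u) (M₀ M₁ M₂ : Set σ) (c₀ c₁ c₂ : Finset σ → L.Color),
    L.MemK W M₀ c₀ → L.MemK W M₁ c₁ → L.MemK W M₂ c₂ →
    Cardinal.mk ↥M₀ = lam → Cardinal.mk ↥M₁ = lam → Cardinal.mk ↥M₂ = lam →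
    L.Substruct M₀ c₀ M₁ c₁ → L.Substruct M₀ c₀ M₂ c₂ →
    ∃ (τ : Type u) (N : Set τ) (c : Finset τ → L.Color) (f₁ f₂ : σ → τ),
      L.MemK W N c ∧ L.Emb f₁ M₁ c₁ N c ∧ L.Emb f₂ M₂ c₂ N c ∧
      (∀ x ∈ M₀, f₁ x = f₂ x) ∧ f₁ '' M₁ ∩ f₂ '' M₂ = f₁ '' M₀

end ColoringLanguage

section Aux
open Cardinal

lemma ERge_def' {C : Type v} (W : Set (List C)) (γ : Ordinal.{u}) (l : List C) :
    ERge W γ l ↔ ∀ β < γ, ∃ l' ∈ W,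
      l'.length = l.length + 1 ∧ l'.take l.length = l ∧ ERge W β l' := by
  rw [ERge, WellFounded.fix_eq]

lemma ERge_mono' {C : Type v} (W : Set (List C)) {β γ : Ordinal.{u}} (h : β ≤ γ)
    {l : List C} (H : ERge W γ l) : ERge W β l := by
  rw [ERge_def'] at H ⊢
  exact fun δ hδ => H δ (hδ.trans_le h)

lemma ERge_of_forall_lt' {C : Type v} (W : Set (List C)) {γ : Ordinal.{u}}
    (hγ : Order.IsSuccLimit γ) {l : List C} (H : ∀ β < γ, ERge W β l) : ERge W γ l := by
  rw [ERge_def']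
  intro β hβ
  have h2 := H (Order.succ β) (hγ.succ_lt hβ)
  rw [ERge_def'] at h2
  exact h2 β (Order.lt_succ β)

lemma list_ext_step' {C : Type*} {l l' : List C} (h1 : l'.length = l.length + 1)
    (h2 : l'.take l.length = l) : ∃ r, l' = l ++ [r] := by
  have hd : (l'.drop l.length).length = 1 := by simp [h1]
  obtain ⟨r, hr⟩ := List.length_eq_one_iff.1 hd
  exact ⟨r, by rw [← List.take_append_drop l.length l', h2, hr]⟩

lemma ERge_step' {C : Type u} [Infinite C] (W : Set (List C)) {l : List C}
    (h : ERge.{u} W (Order.succ (Cardinal.mk C)).ord l) :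
    ∃ r, (l ++ [r]) ∈ W ∧ ERge.{u} W (Order.succ (Cardinal.mk C)).ord (l ++ [r]) := by
  have hκ : ℵ₀ ≤ Cardinal.mk C := Cardinal.aleph0_le_mk C
  have hreg : (Order.succ (Cardinal.mk C)).IsRegular := Cardinal.isRegular_succ hκ
  set Λ := (Order.succ (Cardinal.mk C)).ord with hΛ
  have hlim : Order.IsSuccLimit Λ := Cardinal.isSuccLimit_ord (hκ.trans (Order.le_succ _))
  by_contra hcon
  push_neg at hcon
  have hex : ∀ r : C, ∃ β, β < Λ ∧ ¬ ((l ++ [r]) ∈ W ∧ ERge.{u} W β (l ++ [r])) := by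
    intro r
    by_cases hm : (l ++ [r]) ∈ W
    · by_contra hno
      push_neg at hno
      exact hcon r hm (ERge_of_forall_lt' W hlim fun β hβ => (hno β hβ).2)
    · exact ⟨0, hlim.pos, fun hc => hm hc.1⟩
  choose F hFlt hF using hex
  have hs : (⨆ r, F r) < Λ :=
    Ordinal.iSup_lt_ord (by rw [hreg.cof_eq]; exact Order.lt_succ _) hFlt
  rw [ERge_def'] at h
  obtain ⟨l', hl'W, hlen, htake, hER⟩ := h _ hs
  obtain ⟨r, rfl⟩ := list_ext_step' hlen htake
  exact hF r ⟨hl'W, ERge_mono' W (Ordinal.le_iSup F r) hER⟩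

/-- Chain construction. -/
lemma exists_chain {C : Type u} [Infinite C] (W : Set (List C)) {w : List C}
    (hw : w ∈ W) (h : ERge.{u} W (Order.succ (Cardinal.mk C)).ord w) :
    ∃ u : ℕ → List C, u 0 = w ∧ ∀ n, u n ∈ W ∧
      (u (n + 1)).length = (u n).length + 1 ∧ (u (n + 1)).take (u n).length = u n := by
  set Λ := (Order.succ (Cardinal.mk C)).ord with hΛ
  let G := {l : List C // l ∈ W ∧ ERge.{u} W Λ l}
  have step : ∀ p : G, ∃ l', (l' ∈ W ∧ ERge.{u} W Λ l') ∧
      l'.length = p.1.length + 1 ∧ l'.take p.1.length = p.1 := by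
    rintro ⟨l, hlW, hl⟩
    obtain ⟨r, hrW, hrE⟩ := ERge_step' W hl
    exact ⟨l ++ [r], ⟨hrW, hrE⟩, by simp, by simp⟩
  let g : G → G := fun p => ⟨(step p).choose, (step p).choose_spec.1⟩
  let u : ℕ → G := fun n => g^[n] ⟨w, hw, h⟩
  have hsucc : ∀ n, u (n + 1) = g (u n) := fun n => Function.iterate_succ_apply' g n _
  refine ⟨fun n => (u n).1, rfl, fun n => ⟨(u n).2.1, ?_, ?_⟩⟩
  · show (u (n+1)).1.length = (u n).1.length + 1
    rw [hsucc n]; exact (step (u n)).choose_spec.2.1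
  · show ((u (n+1)).1).take (u n).1.length = (u n).1
    rw [hsucc n]; exact (step (u n)).choose_spec.2.2
end Aux
section Aux2
open Cardinal

lemma ColoringLanguage.infinite_color (L : ColoringLanguage.{u}) : Infinite L.Color := by
  refine Infinite.of_injective (fun n : ℕ => (L.exists_arity (n + 1) (by omega)).choose) ?_
  intro a b hab
  have ha := (L.exists_arity (a + 1) (by omega)).choose_spec
  have hb := (L.exists_arity (b + 1) (by omega)).choose_spec
  simp only at hab
  rw [hab, hb] at ha
  omega

lemma model_of_ERge (L : ColoringLanguage.{u}) (W : Set (List L.Color))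
    (hW : L.IsAllowed W) {w : List L.Color} (hw : w ∈ W)
    (h : ERge.{u} W (Order.succ (Cardinal.mk L.Color)).ord w) :
    ∃ (σ : Type u) (M : Set σ) (c : Finset σ → L.Color),
      M.Infinite ∧ L.MemK W M c ∧ L.Mono c M ∧
        ∀ A : Finset σ, ↑A ⊆ M → A.Nonempty → A.card ≤ w.length →
          w[A.card - 1]? = some (c A) := by
  have : Infinite L.Color := L.infinite_color
  obtain ⟨u, hu0, hu⟩ := exists_chain W hw h
  have hlen : ∀ n, (u n).length = w.length + n := by
    intro n; induction n with
    | zero => simp [hu0]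
    | succ n ih => rw [(hu n).2.1, ih]; omega
  have hlenmono : ∀ {n m : ℕ}, n ≤ m → (u n).length ≤ (u m).length := by
    intro n m h; rw [hlen, hlen]; omega
  have agree : ∀ n m, n ≤ m → ∀ i, i < (u n).length → (u n)[i]? = (u m)[i]? := by
    intro n m hnm
    induction m, hnm using Nat.le_induction with
    | base => intro i _; rfl
    | succ m hnm ih =>
      intro i hi
      rw [ih i hi]
      have h1 : (u (m + 1)).take (u m).length = u m := (hu m).2.2
      have hi' : i < (u m).length := lt_of_lt_of_le hi (hlenmono hnm)
      conv_lhs => rw [← h1]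
      rw [List.getElem?_take, if_pos hi']
  let b : ℕ → L.Color := fun i => ((u (i + 1))[i]?).getD (Classical.arbitrary L.Color)
  have hbsome : ∀ i, (u (i + 1))[i]? = some (b i) := by
    intro i
    have hilt : i < (u (i + 1)).length := by rw [hlen]; omega
    simp only [b, List.getElem?_eq_getElem hilt, Option.getD_some]
  have hb : ∀ n i, i < (u n).length → (u n)[i]? = some (b i) := by
    intro n i hi
    rcases le_total n (i + 1) with hc | hc
    · rw [agree n (i + 1) hc i hi]; exact hbsome i
    · rw [← agree (i + 1) n hc i (by rw [hlen]; omega)]; exact hbsome i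
  refine ⟨ULift.{u} ℕ, Set.univ, fun A => b (A.card - 1), Set.infinite_univ, ⟨?_, ?_⟩, ?_, ?_⟩
  · intro A _ hA
    have hc1 : 1 ≤ A.card := hA.card_pos
    have hkey := hb A.card (A.card - 1) (by rw [hlen]; omega)
    rw [List.getElem?_eq_some_iff] at hkey
    obtain ⟨hh, hkey⟩ := hkey
    have harr := hW.2.1 (u A.card) (hu A.card).1 (A.card - 1) hh
    rw [hkey] at harr
    rw [harr]
    omega
  · intro B _ hB _
    refine ⟨(u B.card).take B.card, hW.2.2 _ (hu B.card).1 B.card, ?_, ?_⟩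
    · rw [List.length_take, hlen]; omega
    · intro A hAB hA
      have hc1 : 1 ≤ A.card := hA.card_pos
      have hcle : A.card ≤ B.card := Finset.card_le_card hAB
      rw [List.getElem?_take, if_pos (by omega)]
      exact hb B.card (A.card - 1) (by rw [hlen]; omega)
  · intro A₁ A₂ _ _ _ hcard
    simp only [hcard]
  · intro A _ hA hcard
    have hc1 : 1 ≤ A.card := hA.card_pos
    have hkey := hb 0 (A.card - 1) (by rw [hlen]; omega)
    rw [hu0] at hkey
    exact hkey
end Aux2
section Aux3
open Cardinal

lemma ERge_of_model (L : ColoringLanguage.{u}) (W : Set (List L.Color))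
    (hW : L.IsAllowed W) {w : List L.Color}
    {σ : Type u} {M : Set σ} {c : Finset σ → L.Color}
    (hM : M.Infinite) (hK : L.MemK W M c) (hmono : L.Mono c M)
    (hext : ∀ A : Finset σ, ↑A ⊆ M → A.Nonempty → A.card ≤ w.length →
      w[A.card - 1]? = some (c A)) :
    ∀ γ : Ordinal.{u}, ERge W γ w := by
  choose S hSsub hScard using fun n : ℕ => hM.exists_subset_card_eq n
  set l : ℕ → List L.Color := fun n => (List.range n).map fun i => c (S (i + 1)) with hl
  have hlen : ∀ n, (l n).length = n := by simp [hl]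
  have hget : ∀ n i, i < n → (l n)[i]? = some (c (S (i + 1))) := by
    intro n i hi
    simp [hl, List.getElem?_map, List.getElem?_range, hi]
  have hSne : ∀ n, 0 < n → (S n).Nonempty := by
    intro n hn; rw [← Finset.card_pos, hScard]; exact hn
  have hmem : ∀ n, l n ∈ W := by
    intro n
    rcases Nat.eq_zero_or_pos n with rfl | hn
    · obtain ⟨l₀, hl₀⟩ := hW.1
      have h0 := hW.2.2 l₀ hl₀ 0
      simpa [hl] using h0
    · have hmonoS : L.Mono c ↑(S n) := by
        intro A₁ A₂ h1 h2 h3 h4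
        exact hmono A₁ A₂ (h1.trans (hSsub n)) (h2.trans (hSsub n)) h3 h4
      obtain ⟨d, hdW, hdlen, hdget⟩ := hK.2 (S n) (hSsub n) (hSne n hn) hmonoS
      have hd : d = l n := by
        apply List.ext_getElem?
        intro i
        rcases lt_or_ge i n with hi | hi
        · obtain ⟨A, hAsub, hAcard⟩ :=
            Finset.exists_subset_card_eq (s := S n) (n := i + 1) (by rw [hScard]; omega)
          have h1 := hdget A hAsub (by rw [← Finset.card_pos, hAcard]; omega)
          rw [hAcard] at h1
          simp only [Nat.add_sub_cancel] at h1
          rw [hget n i hi, h1]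
          congr 1
          refine hmono A (S (i + 1)) ((Finset.coe_subset.2 hAsub).trans (hSsub n))
            (hSsub (i + 1)) ?_ ?_
          · rw [← Finset.card_pos, hAcard]; omega
          · rw [hAcard, hScard]
        · rw [List.getElem?_eq_none (by rw [hdlen, hScard]; exact hi),
            List.getElem?_eq_none (by rw [hlen]; exact hi)]
      rw [← hd]; exact hdW
  have htake : ∀ n, (l (n + 1)).take n = l n := by
    intro n
    show ((List.range (n + 1)).map _).take n = _
    rw [← List.map_take, List.take_range]
    simp [hl, Nat.min_eq_left (Nat.le_succ n)]
  have hw_eq : w = l w.length := by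
    apply List.ext_getElem?
    intro i
    rcases lt_or_ge i w.length with hi | hi
    · rw [hget _ i hi]
      have h1 := hext (S (i + 1)) (hSsub _) (hSne _ (by omega)) (by rw [hScard]; omega)
      rw [hScard] at h1
      simpa using h1
    · rw [List.getElem?_eq_none hi, List.getElem?_eq_none (by rw [hlen]; exact hi)]
  have main : ∀ γ : Ordinal.{u}, ∀ n, ERge W γ (l n) := by
    intro γ
    refine Ordinal.induction (p := fun γ => ∀ n, ERge W γ (l n)) γ ?_
    intro γ IH n
    rw [ERge_def']
    intro β hβ
    refine ⟨l (n + 1), hmem (n + 1), by rw [hlen, hlen], ?_, IH β hβ (n + 1)⟩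
    rw [hlen]
    exact htake n
  intro γ
  rw [hw_eq]
  exact main γ _
end Aux3

/-- For `w ∈ W`, TFAE: (1) `ER(w;W) = ∞`; (2) `ER(w;W) ≥ |L|⁺`;
(3) there is an infinite monochromatic `(M,c) ∈ K(W)` whose diagram extends `w`. -/
theorem stmt0 (L : ColoringLanguage.{u}) (W : Set (List L.Color))
    (hW : L.IsAllowed W) (w : List L.Color) (hw : w ∈ W) :
    ((∀ γ : Ordinal.{u}, ERge W γ w) ↔
        ERge W (Order.succ (Cardinal.mk L.Color)).ord w) ∧
      ((∀ γ : Ordinal.{u}, ERge W γ w) ↔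
        ∃ (σ : Type u) (M : Set σ) (c : Finset σ → L.Color),
          M.Infinite ∧ L.MemK W M c ∧ L.Mono c M ∧
            ∀ A : Finset σ, ↑A ⊆ M → A.Nonempty → A.card ≤ w.length →
              w[A.card - 1]? = some (c A)) := by
  have h31 : (∃ (σ : Type u) (M : Set σ) (c : Finset σ → L.Color),
      M.Infinite ∧ L.MemK W M c ∧ L.Mono c M ∧
        ∀ A : Finset σ, ↑A ⊆ M → A.Nonempty → A.card ≤ w.length →
          w[A.card - 1]? = some (c A)) → ∀ γ : Ordinal.{u}, ERge W γ w := by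
    rintro ⟨σ, M, c, hM, hK, hmono, hext⟩ γ
    exact ERge_of_model L W hW hM hK hmono hext γ
  constructor
  · constructor
    · intro h; exact h _
    · intro h
      exact h31 (model_of_ERge L W hW hw h)
  · constructor
    · intro h; exact model_of_ERge L W hW hw (h _)
    · exact h31
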